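/- Let M = (E, ρ) be a binary matroid with |E| = n, rank k = ρ(E) ≥ 2, and minimum distance d. Then there exists a subset A ⊆ E with |A| = n − d and ρ(A) = k − 1 such that the minimum distance d' of the restriction M|A satisfies 2·d' ≥ d. -/

import Mathlib

open Finset

structure FinMatroid (α : Type*) [DecidableEq α] where
  E : Finset α
  rk : Finset α → ℕ
  rk_le_card : ∀ A, A ⊆ E → rk A ≤ A.card
  rk_mono : ∀ A B, A ⊆ B → B ⊆ E → rk A ≤ rk B
  rk_submod : ∀ A B, A ⊆ E → B ⊆ E → rk (A ∪ B) + rk (A ∩ B) ≤ rk A + rk B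

namespace FinMatroid

variable {α : Type*} [DecidableEq α]

/-- The closure operator `cl(A) = {e ∈ E : ρ(A ∪ {e}) = ρ(A)}`. -/
def cl (M : FinMatroid α) (A : Finset α) : Finset α :=
  M.E.filter fun e => M.rk (insert e A) = M.rk A

/-- The cyclic operator `cyc(A) = {e ∈ A : ρ(A − {e}) = ρ(A)}`. -/
def cyc (M : FinMatroid α) (A : Finset α) : Finset α :=
  A.filter fun e => M.rk (A.erase e) = M.rk A

/-- A flat is a set fixed by the closure operator. -/
def IsFlat (M : FinMatroid α) (F : Finset α) : Prop :=
  F ⊆ M.E ∧ M.cl F = F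

/-- A cyclic set is a set fixed by the cyclic operator. -/
def IsCyclic (M : FinMatroid α) (U : Finset α) : Prop :=
  U ⊆ M.E ∧ M.cyc U = U

/-- A cyclic flat is a set fixed by both the closure and the cyclic operators. -/
def IsCyclicFlat (M : FinMatroid α) (Z : Finset α) : Prop :=
  Z ⊆ M.E ∧ M.cl Z = Z ∧ M.cyc Z = Z

/-- The minor `M|Y/X`: restriction to `Y` followed by contraction of `X`. -/
def minor (M : FinMatroid α) (X Y : Finset α) (hXY : X ⊆ Y) (hY : Y ⊆ M.E) :
    FinMatroid α where
  E := Y \ X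
  rk A := M.rk (A ∪ X) - M.rk X
  rk_le_card := by
    intro A hA
    have hAE : A ⊆ M.E := fun a ha => hY (mem_sdiff.mp (hA ha)).1
    have hXE : X ⊆ M.E := hXY.trans hY
    have h1 := M.rk_submod A X hAE hXE
    have h2 := M.rk_le_card A hAE
    show M.rk (A ∪ X) - M.rk X ≤ A.card
    omega
  rk_mono := by
    intro A B hAB hB
    have hBE : B ⊆ M.E := fun a ha => hY (mem_sdiff.mp (hB ha)).1
    have hBX : B ∪ X ⊆ M.E := union_subset hBE (hXY.trans hY)
    have := M.rk_mono (A ∪ X) (B ∪ X) (union_subset_union hAB Subset.rfl) hBX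
    show M.rk (A ∪ X) - M.rk X ≤ M.rk (B ∪ X) - M.rk X
    omega
  rk_submod := by
    intro A B hA hB
    have hAE : A ⊆ M.E := fun a ha => hY (mem_sdiff.mp (hA ha)).1
    have hBE : B ⊆ M.E := fun a ha => hY (mem_sdiff.mp (hB ha)).1
    have hXE : X ⊆ M.E := hXY.trans hY
    have hAX : A ∪ X ⊆ M.E := union_subset hAE hXE
    have hBX : B ∪ X ⊆ M.E := union_subset hBE hXE
    have hsub := M.rk_submod (A ∪ X) (B ∪ X) hAX hBX
    have e1 : (A ∪ X) ∪ (B ∪ X) = (A ∪ B) ∪ X := by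
      ext x; simp only [mem_union]; tauto
    have e2 : (A ∪ X) ∩ (B ∪ X) = (A ∩ B) ∪ X := by
      ext x; simp only [mem_union, mem_inter]; tauto
    rw [e1, e2] at hsub
    have h1 : M.rk X ≤ M.rk (A ∪ X) := M.rk_mono X _ subset_union_right hAX
    have h2 : M.rk X ≤ M.rk (B ∪ X) := M.rk_mono X _ subset_union_right hBX
    have hIX : (A ∩ B) ∪ X ⊆ M.E := union_subset (inter_subset_left.trans hAE) hXE
    have hUX : (A ∪ B) ∪ X ⊆ M.E := union_subset (union_subset hAE hBE) hXE
    have h3 : M.rk X ≤ M.rk ((A ∩ B) ∪ X) := M.rk_mono X _ subset_union_right hIX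
    have h4 : M.rk X ≤ M.rk ((A ∪ B) ∪ X) := M.rk_mono X _ subset_union_right hUX
    show M.rk ((A ∪ B) ∪ X) - M.rk X + (M.rk ((A ∩ B) ∪ X) - M.rk X) ≤
      (M.rk (A ∪ X) - M.rk X) + (M.rk (B ∪ X) - M.rk X)
    omega

/-- The restriction `M|Y`. -/
def restrict (M : FinMatroid α) (Y : Finset α) (hY : Y ⊆ M.E) : FinMatroid α where
  E := Y
  rk := M.rk
  rk_le_card := fun A hA => M.rk_le_card A (hA.trans hY)
  rk_mono := fun A B hAB hB => M.rk_mono A B hAB (hB.trans hY)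
  rk_submod := fun A B hA hB => M.rk_submod A B (hA.trans hY) (hB.trans hY)

/-- `M` is binary: it is the matroid of linear dependence of a family of
vectors over the field with two elements. -/
def IsBinary (M : FinMatroid α) : Prop :=
  ∃ (m : ℕ) (φ : α → (Fin m → ZMod 2)),
    ∀ A : Finset α, A ⊆ M.E →
      M.rk A = Module.finrank (ZMod 2) (Submodule.span (ZMod 2) (φ '' (A : Set α)))

def Simple (M : FinMatroid α) : Prop :=
  (∀ e ∈ M.E, M.rk {e} = 1) ∧
    ∀ e ∈ M.E, ∀ f ∈ M.E, e ≠ f → M.rk ({e, f} : Finset α) = 2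

def NoIsthmus (M : FinMatroid α) : Prop :=
  ∀ e ∈ M.E, M.rk (M.E.erase e) = M.rk M.E

def IsMinDist (M : FinMatroid α) (d : ℕ) : Prop :=
  (∃ X ⊆ M.E, M.rk (M.E \ X) < M.rk M.E ∧ X.card = d) ∧
    ∀ X ⊆ M.E, M.rk (M.E \ X) < M.rk M.E → d ≤ X.card

def IsAtomCF (M : FinMatroid α) (Z : Finset α) : Prop :=
  M.IsCyclicFlat Z ∧ Z ≠ ∅ ∧ ¬ ∃ Z', M.IsCyclicFlat Z' ∧ ∅ ⊂ Z' ∧ Z' ⊂ Z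

def IsCoatomCF (M : FinMatroid α) (Z : Finset α) : Prop :=
  M.IsCyclicFlat Z ∧ Z ⊂ M.E ∧ ¬ ∃ Z', M.IsCyclicFlat Z' ∧ Z ⊂ Z' ∧ Z' ⊂ M.E

def IsCircuit (M : FinMatroid α) (C : Finset α) : Prop :=
  C ⊆ M.E ∧ M.rk C < C.card ∧ ∀ D ⊂ C, M.rk D = D.card

end FinMatroid


/-- If `M` is binary with `n = |E|`, rank `k ≥ 2` and minimum distance
`d`, then there is `A ⊆ E` with `|A| = n − d`, `ρ(A) = k − 1`, such that the minimum
distance `d'` of `M|A` satisfies `2·d' ≥ d`. -/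

private lemma rank_lt_iff_dual {α : Type*} [DecidableEq α] {m : ℕ}
    {φ : α → (Fin m → ZMod 2)} {rk : Finset α → ℕ} {S T : Finset α}
    (hS : rk S = Module.finrank (ZMod 2) (Submodule.span (ZMod 2) (φ '' (S : Set α))))
    (hT : rk T = Module.finrank (ZMod 2) (Submodule.span (ZMod 2) (φ '' (T : Set α))))
    (hST : S ⊆ T) :
    rk S < rk T ↔ ∃ f : (Fin m → ZMod 2) →ₗ[ZMod 2] ZMod 2,
      (∀ e ∈ S, f (φ e) = 0) ∧ ∃ e ∈ T, f (φ e) ≠ 0 := by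
  rw [hS, hT]
  set sS := Submodule.span (ZMod 2) (φ '' (S : Set α)) with hsS
  set sT := Submodule.span (ZMod 2) (φ '' (T : Set α)) with hsT
  have hle : sS ≤ sT := Submodule.span_mono (Set.image_mono (by exact_mod_cast hST))
  constructor
  · intro hlt
    have hne : ∃ e ∈ T, φ e ∉ sS := by
      by_contra hc
      push_neg at hc
      have : sT ≤ sS := Submodule.span_le.mpr (by
        rintro v ⟨e, he, rfl⟩; exact hc e (by exact_mod_cast he))
      exact absurd (Submodule.finrank_mono this) (by omega)
    obtain ⟨e, heT, he⟩ := hne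
    have hq : sS.mkQ (φ e) ≠ 0 := by
      rw [Submodule.mkQ_apply]
      exact fun h => he ((Submodule.Quotient.mk_eq_zero sS).mp h)
    have := (Module.forall_dual_apply_eq_zero_iff (ZMod 2) (sS.mkQ (φ e))).not.mpr hq
    push_neg at this
    obtain ⟨g, hg⟩ := this
    refine ⟨g.comp sS.mkQ, fun s hs => ?_, e, heT, hg⟩
    have : φ s ∈ sS := Submodule.subset_span ⟨s, by exact_mod_cast hs, rfl⟩
    simp [Submodule.mkQ_apply, (Submodule.Quotient.mk_eq_zero sS).mpr this]
  · rintro ⟨f, hf0, e, heT, hfe⟩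
    have hker : sS ≤ LinearMap.ker f := Submodule.span_le.mpr (by
      rintro v ⟨s, hs, rfl⟩; exact hf0 s (by exact_mod_cast hs))
    have hlt : sS < sT := lt_of_le_of_ne hle (by
      intro h
      exact hfe (hker (h ▸ Submodule.subset_span ⟨e, by exact_mod_cast heT, rfl⟩)))
    exact Submodule.finrank_lt_finrank_of_lt hlt

theorem exists_residual {α : Type*} [DecidableEq α] (M : FinMatroid α)
    (hb : M.IsBinary) (hk : 2 ≤ M.rk M.E) (d : ℕ) (hd : M.IsMinDist d) :
    ∃ (A : Finset α) (hA : A ⊆ M.E), A.card + d = M.E.card ∧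
      M.rk A + 1 = M.rk M.E ∧
      ∃ d' : ℕ, (M.restrict A hA).IsMinDist d' ∧ d ≤ 2 * d' := by
  classical
  obtain ⟨m, φ, hφ⟩ := hb
  obtain ⟨⟨X₀, hX₀E, hX₀rk, hX₀card⟩, hmin⟩ := hd
  have hd1 : 1 ≤ d := by
    rcases Nat.eq_zero_or_pos d with h0 | h
    · exfalso
      rw [h0, Finset.card_eq_zero] at hX₀card
      rw [hX₀card, sdiff_empty] at hX₀rk
      omega
    · exact h
  obtain ⟨f₀, hf₀0, e₁, he₁E, he₁⟩ :=
    (rank_lt_iff_dual (hφ _ (sdiff_subset.trans Subset.rfl)) (hφ M.E Subset.rfl)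
      sdiff_subset).mp hX₀rk
  set X := M.E.filter (fun e => f₀ (φ e) ≠ 0) with hXdef
  have hXE : X ⊆ M.E := filter_subset _ _
  have hXX₀ : X ⊆ X₀ := by
    intro e he; rw [hXdef, mem_filter] at he
    by_contra hc
    exact he.2 (hf₀0 e (mem_sdiff.mpr ⟨he.1, hc⟩))
  set A := M.E \ X with hAdef
  have hA : A ⊆ M.E := sdiff_subset
  have hf₀A : ∀ e ∈ A, f₀ (φ e) = 0 := by
    intro e he; rw [hAdef, mem_sdiff] at he
    by_contra hc; exact he.2 (by rw [hXdef, mem_filter]; exact ⟨he.1, hc⟩)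
  have hrkA : M.rk A < M.rk M.E :=
    (rank_lt_iff_dual (hφ A hA) (hφ M.E Subset.rfl) hA).mpr ⟨f₀, hf₀A, e₁, he₁E, he₁⟩
  have hXcard : X.card = d := by
    have h1 : d ≤ X.card := hmin X hXE hrkA
    have h2 : X.card ≤ d := hX₀card ▸ card_le_card hXX₀
    omega
  have he₁X : e₁ ∈ X := by rw [hXdef, mem_filter]; exact ⟨he₁E, he₁⟩
  have hEX' : M.E \ X.erase e₁ = insert e₁ A := by
    ext x
    simp only [hAdef, mem_sdiff, mem_erase, mem_insert]
    constructor
    · rintro ⟨hxE, hx⟩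
      by_cases hxe : x = e₁
      · exact Or.inl hxe
      · exact Or.inr ⟨hxE, fun hxX => hx ⟨hxe, hxX⟩⟩
    · rintro (rfl | ⟨hxE, hxX⟩)
      · exact ⟨he₁E, fun h => h.1 rfl⟩
      · exact ⟨hxE, fun h => hxX h.2⟩
  have hrkins : M.rk (M.E \ X.erase e₁) = M.rk M.E := by
    have hle := M.rk_mono (M.E \ X.erase e₁) M.E sdiff_subset Subset.rfl
    by_contra hne
    have hlt : M.rk (M.E \ X.erase e₁) < M.rk M.E := lt_of_le_of_ne hle hne
    have h2 := hmin _ ((erase_subset _ _).trans hXE) hlt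
    have hc : (X.erase e₁).card = d - 1 := by rw [card_erase_of_mem he₁X, hXcard]
    omega
  have hsub := M.rk_submod A {e₁} hA (by simpa using he₁E)
  have h1e : M.rk {e₁} ≤ 1 := by simpa using M.rk_le_card {e₁} (by simpa using he₁E)
  have hAe : A ∪ {e₁} = insert e₁ A := by ext x; simp [mem_insert, mem_union, or_comm]
  have hrkA1 : M.rk A + 1 = M.rk M.E := by
    rw [hEX', ← hAe] at hrkins
    omega
  have hcardA : A.card + d = M.E.card := by
    have h1 : A.card = M.E.card - X.card := by rw [hAdef, card_sdiff_of_subset hXE]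
    have h2 := card_le_card hXE
    omega
  have hPex : ∃ c : ℕ, ∃ Y, Y ⊆ A ∧ M.rk (A \ Y) < M.rk A ∧ Y.card = c := by
    refine ⟨A.card, A, Subset.rfl, ?_, rfl⟩
    have h0 := M.rk_le_card (A \ A) (sdiff_subset.trans hA)
    have h1 : (A \ A).card = 0 := by simp
    omega
  obtain ⟨Y, hYA, hYrk, hYcard⟩ := Nat.find_spec hPex
  refine ⟨A, hA, hcardA, hrkA1, Nat.find hPex, ⟨⟨Y, hYA, hYrk, hYcard⟩, ?_⟩, ?_⟩
  · intro Z hZ hZrk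
    exact Nat.find_min' hPex ⟨Z, hZ, hZrk, rfl⟩
  · -- d ≤ 2 * d'
    obtain ⟨g, hg0, a, haA, hga⟩ :=
      (rank_lt_iff_dual (hφ (A \ Y) (sdiff_subset.trans hA)) (hφ A hA) sdiff_subset).mp hYrk
    set T := M.E.filter (fun e => g (φ e) ≠ 0) with hTdef
    have hTE : T ⊆ M.E := filter_subset _ _
    have hgT : ∀ e ∈ M.E \ T, g (φ e) = 0 := by
      intro e he; rw [mem_sdiff] at he
      by_contra hc; exact he.2 (by rw [hTdef, mem_filter]; exact ⟨he.1, hc⟩)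
    have hTrk : M.rk (M.E \ T) < M.rk M.E :=
      (rank_lt_iff_dual (hφ _ sdiff_subset) (hφ M.E Subset.rfl) sdiff_subset).mpr
        ⟨g, hgT, a, hA haA, hga⟩
    have hdT : d ≤ T.card := hmin T hTE hTrk
    have hTAY : T ∩ A ⊆ Y := by
      intro e he; rw [mem_inter] at he
      by_contra hc
      have h1 := he.1
      rw [hTdef, mem_filter] at h1
      exact h1.2 (hg0 e (mem_sdiff.mpr ⟨he.2, hc⟩))
    set Sh := M.E.filter (fun e => (f₀ + g) (φ e) ≠ 0) with hShdef
    have hna : (f₀ + g) (φ a) ≠ 0 := by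
      simp [LinearMap.add_apply, hf₀A a haA, hga]
    have hvan : ∀ e ∈ M.E \ Sh, (f₀ + g) (φ e) = 0 := by
      intro e he; rw [mem_sdiff] at he
      by_contra hc; exact he.2 (by rw [hShdef, mem_filter]; exact ⟨he.1, hc⟩)
    have hShrk : M.rk (M.E \ Sh) < M.rk M.E :=
      (rank_lt_iff_dual (hφ _ sdiff_subset) (hφ M.E Subset.rfl) sdiff_subset).mpr
        ⟨f₀ + g, hvan, a, hA haA, hna⟩
    have hdSh : d ≤ Sh.card := hmin _ (filter_subset _ _) hShrk
    have hzmod : ∀ x y : ZMod 2,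
        (x + y ≠ 0 ↔ (x ≠ 0 ∧ ¬ y ≠ 0) ∨ (y ≠ 0 ∧ ¬ x ≠ 0)) := by decide
    have hShEq : Sh = (X \ T) ∪ (T ∩ A) := by
      ext e
      simp only [hShdef, hXdef, hTdef, hAdef, mem_filter, mem_sdiff, mem_union,
        mem_inter, LinearMap.add_apply]
      by_cases he : e ∈ M.E
      · simp only [he, true_and, not_true_eq_false, not_and, true_implies]
        have := hzmod (f₀ (φ e)) (g (φ e))
        tauto
      · simp [he]
    have hTeq : T = (X ∩ T) ∪ (T ∩ A) := by
      ext e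
      simp only [hTdef, hXdef, hAdef, mem_union, mem_inter, mem_filter, mem_sdiff]
      by_cases he : e ∈ M.E
      · simp only [he, true_and]
        tauto
      · simp [he]
    have hdisj1 : Disjoint (X \ T) (T ∩ A) := by
      refine disjoint_left.mpr ?_
      intro e he1 he2
      exact (mem_sdiff.mp he1).2 (mem_inter.mp he2).1
    have hdisj2 : Disjoint (X ∩ T) (T ∩ A) := by
      refine disjoint_left.mpr ?_
      intro e he1 he2
      have heA := (mem_inter.mp he2).2
      rw [hAdef, mem_sdiff] at heA
      exact heA.2 (mem_inter.mp he1).1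
    have hcardSh : Sh.card = (X \ T).card + (T ∩ A).card := by
      rw [hShEq, card_union_of_disjoint hdisj1]
    have hcardT : T.card = (X ∩ T).card + (T ∩ A).card := by
      conv_lhs => rw [hTeq]
      rw [card_union_of_disjoint hdisj2]
    have hXsplit : (X ∩ T).card + (X \ T).card = X.card := card_inter_add_card_sdiff X T
    have hTAle : (T ∩ A).card ≤ Y.card := card_le_card hTAY
    omega
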